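/- For a real parameter m with 0 ≤ m < 1 and α with |α| ≤ 1, define R_m(α) = ∫₀¹ (1-t²)^{m/2} [∫₀^∞∫₀^∞ exp(-(r² + r'² - 2rr't α)/2) (rr')^m dr dr'] dt. Then R_m(α) ≤ 2√π · Γ(m + 1/2)/(1-m). -/

import Mathlib

open MeasureTheory Real

open Set
open scoped ENNReal

/-- The function `R_m(α)`. -/
noncomputable def Rfun (m α : ℝ) : ℝ :=
  ∫ t in Set.Ioo (0 : ℝ) 1,
    (1 - t ^ 2) ^ (m / 2) *
      ∫ r in Set.Ioi (0 : ℝ), ∫ r' in Set.Ioi (0 : ℝ),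
        Real.exp (-(r ^ 2 + r' ^ 2 - 2 * r * r' * t * α) / 2) * (r * r') ^ m

lemma aux_ofReal_integral_le {X : Type*} [MeasurableSpace X] {μ : Measure X}
    {f : X → ℝ} (hnn : 0 ≤ᵐ[μ] f) (hm : AEStronglyMeasurable f μ) :
    ENNReal.ofReal (∫ x, f x ∂μ) ≤ ∫⁻ x, ENNReal.ofReal (f x) ∂μ := by
  rw [integral_eq_lintegral_of_nonneg_ae hnn hm]
  exact ENNReal.ofReal_toReal_le

lemma aux_meas (m t α : ℝ) :
    Measurable (fun p : ℝ × ℝ =>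
      Real.exp (-(p.1 ^ 2 + p.2 ^ 2 - 2 * p.1 * p.2 * t * α) / 2) * (p.1 * p.2) ^ m) := by
  fun_prop

/-- The ENNReal-level core estimate. -/
lemma core (m t α : ℝ) (hm0 : 0 ≤ m) (hφnn : ∀ x : ℝ, 0 < x → (0:ℝ) ≤ x ^ (2*m) * Real.exp (-(1-t) * x ^ 2))
    (cφ cψ : ℝ) (hcφnn : 0 ≤ cφ)
    (hIφ : ∫⁻ x in Ioi (0:ℝ), ENNReal.ofReal (x ^ (2*m) * Real.exp (-(1-t) * x ^ 2)) = ENNReal.ofReal cφ)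
    (hIψ : ∫⁻ w : ℝ, ENNReal.ofReal (Real.exp (-((1+t)/4) * w ^ 2)) = ENNReal.ofReal cψ) :
    (∫⁻ r in Ioi (0:ℝ), ∫⁻ r' in Ioi (0:ℝ),
        ENNReal.ofReal (((r+r')/2) ^ (2*m) * Real.exp (-(1-t) * ((r+r')/2) ^ 2)
          * Real.exp (-((1+t)/4) * (r'-r) ^ 2)))
      ≤ ENNReal.ofReal (cφ * cψ) := by
  classical
  set φ : ℝ → ℝ := fun x => x ^ (2*m) * Real.exp (-(1-t) * x ^ 2) with hφ
  set ψ : ℝ → ℝ := fun w => Real.exp (-((1+t)/4) * w ^ 2) with hψ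
  have hφmeas : Measurable φ := by fun_prop
  have hψmeas : Measurable ψ := by fun_prop
  set G : ℝ → ℝ → ℝ≥0∞ := fun r r' => ENNReal.ofReal (φ ((r+r')/2) * ψ (r'-r)) with hG
  set Q : ℝ → ℝ → ℝ≥0∞ := fun r w =>
    if 0 < r ∧ 0 < w + r then ENNReal.ofReal (φ (r + w/2) * ψ w) else 0 with hQ
  have hQmeas : Measurable (Function.uncurry Q) := by
    apply Measurable.ite
    · exact ((measurableSet_lt measurable_const measurable_fst).inter
        (measurableSet_lt measurable_const (measurable_snd.add measurable_fst)))
    · exact ((hφmeas.comp (measurable_fst.add (measurable_snd.div_const 2))).mul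
        (hψmeas.comp measurable_snd)).ennreal_ofReal
    · exact measurable_const
  have step2 : (∫⁻ r in Ioi (0:ℝ), ∫⁻ r' in Ioi (0:ℝ), G r r') = ∫⁻ r, ∫⁻ w, Q r w := by
    rw [← lintegral_indicator measurableSet_Ioi]
    congr 1
    funext r
    by_cases hr : 0 < r
    · rw [Set.indicator_of_mem (mem_Ioi.2 hr)]
      rw [← lintegral_indicator measurableSet_Ioi]
      rw [← MeasureTheory.lintegral_add_right_eq_self
            (fun y => (Ioi (0:ℝ)).indicator (G r) y) r]
      apply lintegral_congr
      intro w
      by_cases hw : 0 < w + r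
      · rw [Set.indicator_of_mem (mem_Ioi.2 hw)]
        have h1 : Q r w = ENNReal.ofReal (φ (r + w/2) * ψ w) := by
          simp only [hQ]; exact if_pos ⟨hr, hw⟩
        rw [h1]
        simp only [hG]
        rw [show (r + (w + r))/2 = r + w/2 from by ring, show w + r - r = w from by ring]
      · rw [Set.indicator_of_notMem (by simpa using hw)]
        simp only [hQ, hw, and_false, if_false]
    · rw [Set.indicator_of_notMem (by simpa using hr)]
      symm
      simp only [hQ, hr, false_and, if_false]
      exact lintegral_zero
  have goalG : (∫⁻ r in Ioi (0:ℝ), ∫⁻ r' in Ioi (0:ℝ), G r r') ≤ ENNReal.ofReal (cφ * cψ) := by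
    rw [step2, lintegral_lintegral_swap hQmeas.aemeasurable]
    have step3 : ∀ w : ℝ, (∫⁻ r, Q r w)
        ≤ (∫⁻ x in Ioi (0:ℝ), ENNReal.ofReal (φ x)) * ENNReal.ofReal (ψ w) := by
      intro w
      rw [← MeasureTheory.lintegral_add_right_eq_self (fun r => Q r w) (-(w/2))]
      rw [← lintegral_indicator measurableSet_Ioi, ← lintegral_mul_const _
        ((hφmeas.ennreal_ofReal).indicator measurableSet_Ioi)]
      apply lintegral_mono
      intro x
      by_cases hc : 0 < x + -(w/2) ∧ 0 < w + (x + -(w/2))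
      · have hx : 0 < x := by
          rcases hc with ⟨h1, h2⟩; linarith
        simp only [hQ, if_pos hc]
        rw [Set.indicator_of_mem (mem_Ioi.2 hx)]
        rw [show x + -(w/2) + w/2 = x from by ring, ENNReal.ofReal_mul (hφnn x hx)]
      · simp only [hQ, if_neg hc]
        exact zero_le
    calc ∫⁻ w, ∫⁻ r, Q r w
        ≤ ∫⁻ w, (∫⁻ x in Ioi (0:ℝ), ENNReal.ofReal (φ x)) * ENNReal.ofReal (ψ w) :=
          lintegral_mono step3
      _ = (∫⁻ x in Ioi (0:ℝ), ENNReal.ofReal (φ x)) * ∫⁻ w, ENNReal.ofReal (ψ w) :=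
          lintegral_const_mul _ hψmeas.ennreal_ofReal
      _ = ENNReal.ofReal cφ * ENNReal.ofReal cψ := by rw [hIφ, hIψ]
      _ = ENNReal.ofReal (cφ * cψ) := (ENNReal.ofReal_mul hcφnn).symm
  calc (∫⁻ r in Ioi (0:ℝ), ∫⁻ r' in Ioi (0:ℝ),
        ENNReal.ofReal (((r+r')/2) ^ (2*m) * Real.exp (-(1-t) * ((r+r')/2) ^ 2)
          * Real.exp (-((1+t)/4) * (r'-r) ^ 2)))
      = ∫⁻ r in Ioi (0:ℝ), ∫⁻ r' in Ioi (0:ℝ), G r r' := by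
        apply lintegral_congr; intro r; apply lintegral_congr; intro r'
        simp only [hG, hφ, hψ]
    _ ≤ ENNReal.ofReal (cφ * cψ) := goalG

/-- Key bound for the double integral, for fixed `t ∈ (0,1)`. -/
lemma key (m : ℝ) (hm0 : 0 ≤ m) (α : ℝ) (hα : |α| ≤ 1) {t : ℝ} (ht0 : 0 < t) (ht1 : t < 1) :
    (∫ r in Ioi (0:ℝ), ∫ r' in Ioi (0:ℝ),
        Real.exp (-(r ^ 2 + r' ^ 2 - 2 * r * r' * t * α) / 2) * (r * r') ^ m)
      ≤ ((1-t) ^ (-(2*m+1)/2) * (1/2) * Real.Gamma ((2*m+1)/2)) * Real.sqrt (π / ((1+t)/4)) := by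
  have ht0' : (0:ℝ) < 1 - t := by linarith
  have ht1' : (0:ℝ) < (1 + t) / 4 := by linarith
  set f : ℝ → ℝ → ℝ := fun r r' =>
    Real.exp (-(r ^ 2 + r' ^ 2 - 2 * r * r' * t * α) / 2) * (r * r') ^ m with hf
  set cφ : ℝ := (1-t) ^ (-(2*m+1)/2) * (1/2) * Real.Gamma ((2*m+1)/2) with hcφ
  set cψ : ℝ := Real.sqrt (π / ((1+t)/4)) with hcψ
  have hφnn : ∀ x : ℝ, 0 < x → (0:ℝ) ≤ x ^ (2*m) * Real.exp (-(1-t) * x ^ 2) :=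
    fun x hx => by positivity
  have hcφnn : 0 ≤ cφ := by
    have := Real.Gamma_pos_of_pos (show (0:ℝ) < (2*m+1)/2 by linarith)
    rw [hcφ]; positivity
  have hcψnn : 0 ≤ cψ := Real.sqrt_nonneg _
  -- pointwise bound on the positive quadrant
  have hpt : ∀ r r' : ℝ, 0 < r → 0 < r' → f r r' ≤
      ((r+r')/2) ^ (2*m) * Real.exp (-(1-t) * ((r+r')/2) ^ 2)
        * Real.exp (-((1+t)/4) * (r'-r) ^ 2) := by
    intro r r' hr hr'
    have h1 : Real.exp (-(r ^ 2 + r' ^ 2 - 2 * r * r' * t * α) / 2)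
        ≤ Real.exp (-(1-t) * ((r+r')/2) ^ 2) * Real.exp (-((1+t)/4) * (r' - r) ^ 2) := by
      rw [← Real.exp_add]
      apply Real.exp_le_exp.2
      have : r * r' * (t * α) ≤ r * r' * t := by
        apply mul_le_mul_of_nonneg_left _ (by positivity)
        nlinarith [abs_le.1 hα]
      nlinarith
    have h2 : (r * r') ^ m ≤ ((r+r')/2) ^ (2*m) := by
      have hs : (0:ℝ) ≤ (r+r')/2 := by linarith
      have h2m : ((r+r')/2) ^ (2*m) = (((r+r')/2) ^ (2:ℕ)) ^ m := by
        rw [← Real.rpow_natCast ((r+r')/2) 2, ← Real.rpow_mul hs]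
        norm_num
      rw [h2m]
      apply Real.rpow_le_rpow (by positivity) _ hm0
      nlinarith
    calc f r r' ≤ (Real.exp (-(1-t) * ((r+r')/2) ^ 2) * Real.exp (-((1+t)/4) * (r' - r) ^ 2))
          * ((r+r')/2) ^ (2*m) :=
          mul_le_mul h1 h2 (by positivity) (by positivity)
      _ = _ := by ring
  -- compute the two one-dimensional integrals
  have hIφ : ∫⁻ x in Ioi (0:ℝ), ENNReal.ofReal (x ^ (2*m) * Real.exp (-(1-t) * x ^ 2))
      = ENNReal.ofReal cφ := by
    rw [← ofReal_integral_eq_lintegral_ofReal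
        (integrableOn_rpow_mul_exp_neg_mul_sq ht0' (by linarith : (-1:ℝ) < 2*m))
        ((ae_restrict_mem measurableSet_Ioi).mono (fun x hx => hφnn x hx))]
    congr 1
    rw [hcφ]
    rw [show (∫ x in Ioi (0:ℝ), x ^ (2*m) * Real.exp (-(1-t) * x ^ 2))
        = ∫ x in Ioi (0:ℝ), x ^ (2*m) * Real.exp (-(1-t) * x ^ ((2:ℕ):ℝ)) from
      setIntegral_congr_fun measurableSet_Ioi (fun x _ => by norm_num [Real.rpow_natCast])]
    rw [integral_rpow_mul_exp_neg_mul_rpow (by norm_num) (by linarith : (-1:ℝ) < 2*m) ht0']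
    norm_num
  have hIψ : ∫⁻ w : ℝ, ENNReal.ofReal (Real.exp (-((1+t)/4) * w ^ 2)) = ENNReal.ofReal cψ := by
    rw [← ofReal_integral_eq_lintegral_ofReal (integrable_exp_neg_mul_sq ht1')
        (Filter.Eventually.of_forall (fun w => (Real.exp_pos _).le))]
    rw [integral_gaussian]
  -- convert the Bochner double integral
  have hFnn : 0 ≤ᵐ[volume.restrict (Ioi (0:ℝ))] (fun r => ∫ r' in Ioi (0:ℝ), f r r') := by
    filter_upwards [ae_restrict_mem measurableSet_Ioi] with r hr
    apply setIntegral_nonneg measurableSet_Ioi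
    intro r' hr'
    have : (0:ℝ) ≤ r * r' := mul_nonneg (le_of_lt hr) (le_of_lt hr')
    positivity
  have hFmeas : AEStronglyMeasurable (fun r => ∫ r' in Ioi (0:ℝ), f r r')
      (volume.restrict (Ioi (0:ℝ))) := by
    apply StronglyMeasurable.aestronglyMeasurable
    exact (aux_meas m t α).stronglyMeasurable.integral_prod_right'
  rw [show (∫ r in Ioi (0:ℝ), ∫ r' in Ioi (0:ℝ),
      Real.exp (-(r ^ 2 + r' ^ 2 - 2 * r * r' * t * α) / 2) * (r * r') ^ m)
      = ∫ r in Ioi (0:ℝ), ∫ r' in Ioi (0:ℝ), f r r' from rfl]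
  rw [integral_eq_lintegral_of_nonneg_ae hFnn hFmeas]
  apply ENNReal.toReal_le_of_le_ofReal (by positivity)
  calc (∫⁻ r in Ioi (0:ℝ), ENNReal.ofReal (∫ r' in Ioi (0:ℝ), f r r'))
      ≤ ∫⁻ r in Ioi (0:ℝ), ∫⁻ r' in Ioi (0:ℝ), ENNReal.ofReal (f r r') := by
        apply lintegral_mono_ae
        filter_upwards [ae_restrict_mem measurableSet_Ioi] with r hr
        apply aux_ofReal_integral_le
        · filter_upwards [ae_restrict_mem measurableSet_Ioi] with r' hr'
          have : (0:ℝ) ≤ r * r' := mul_nonneg (le_of_lt hr) (le_of_lt hr')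
          positivity
        · exact (((aux_meas m t α).comp (measurable_prodMk_left)).aestronglyMeasurable)
    _ ≤ ∫⁻ r in Ioi (0:ℝ), ∫⁻ r' in Ioi (0:ℝ),
          ENNReal.ofReal (((r+r')/2) ^ (2*m) * Real.exp (-(1-t) * ((r+r')/2) ^ 2)
            * Real.exp (-((1+t)/4) * (r'-r) ^ 2)) := by
        apply lintegral_mono_ae
        filter_upwards [ae_restrict_mem measurableSet_Ioi] with r hr
        apply lintegral_mono_ae
        filter_upwards [ae_restrict_mem measurableSet_Ioi] with r' hr'
        exact ENNReal.ofReal_le_ofReal (hpt r r' hr hr')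
    _ ≤ ENNReal.ofReal (cφ * cψ) := core m t α hm0 hφnn cφ cψ hcφnn hIφ hIψ

lemma alg (m : ℝ) (hm0 : 0 ≤ m) (hm1 : m < 1) {t : ℝ} (ht0 : 0 < t) (ht1 : t < 1) :
    (1 - t^2) ^ (m/2) * (((1-t) ^ (-(2*m+1)/2) * (1/2) * Real.Gamma ((2*m+1)/2))
        * Real.sqrt (π / ((1+t)/4)))
      ≤ Real.sqrt π * Real.Gamma (m + 1/2) * (1-t) ^ (-((m+1)/2)) := by
  have ha : (0:ℝ) < 1 - t := by linarith
  have hb : (1:ℝ) ≤ 1 + t := by linarith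
  have hb0 : (0:ℝ) < 1 + t := by linarith
  have hT : (0:ℝ) < Real.sqrt (1+t) := Real.sqrt_pos.2 hb0
  have hΓ : Real.Gamma ((2*m+1)/2) = Real.Gamma (m + 1/2) := by
    congr 1; ring
  have hΓpos : 0 < Real.Gamma (m + 1/2) := Real.Gamma_pos_of_pos (by linarith)
  have h1 : (1 - t^2 : ℝ) ^ (m/2) = (1-t)^(m/2) * (1+t)^(m/2) := by
    rw [show (1 - t^2 : ℝ) = (1-t)*(1+t) from by ring]
    exact Real.mul_rpow ha.le hb0.le
  have h3 : Real.sqrt (π / ((1+t)/4)) = Real.sqrt π * 2 / Real.sqrt (1+t) := by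
    rw [div_div_eq_mul_div, Real.sqrt_div (by positivity) (1+t)]
    congr 1
    rw [Real.sqrt_mul pi_nonneg, show Real.sqrt 4 = 2 from by
      rw [show (4:ℝ) = 2^2 from by norm_num, Real.sqrt_sq (by norm_num)]]
  have h4 : (1-t)^(m/2) * (1-t)^(-(2*m+1)/2) = (1-t)^(-((m+1)/2)) := by
    rw [← Real.rpow_add ha]
    congr 1; ring
  have h5 : (1+t)^(m/2) / Real.sqrt (1+t) ≤ 1 := by
    rw [div_le_one hT, Real.sqrt_eq_rpow]
    exact Real.rpow_le_rpow_of_exponent_le hb (by linarith)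
  have hEq : (1 - t^2) ^ (m/2) * (((1-t) ^ (-(2*m+1)/2) * (1/2) * Real.Gamma ((2*m+1)/2))
        * Real.sqrt (π / ((1+t)/4)))
      = (Real.sqrt π * Real.Gamma (m + 1/2) * (1-t) ^ (-((m+1)/2)))
        * ((1+t)^(m/2) / Real.sqrt (1+t)) := by
    rw [h1, h3, hΓ, ← h4]
    field_simp
  rw [hEq]
  exact mul_le_of_le_one_right (by positivity) h5

/-- For `0 ≤ m < 1` and `|α| ≤ 1`, `R_m(α) ≤ 2√π Γ(m+1/2)/(1-m)`. -/
theorem statement5 (m : ℝ) (hm0 : 0 ≤ m) (hm1 : m < 1) (α : ℝ) (hα : |α| ≤ 1) :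
    Rfun m α ≤ 2 * Real.sqrt π * Real.Gamma (m + 1 / 2) / (1 - m) := by
  have hΓpos : 0 < Real.Gamma (m + 1/2) := Real.Gamma_pos_of_pos (by linarith)
  have hc0 : (0:ℝ) ≤ Real.sqrt π * Real.Gamma (m + 1/2) := by positivity
  set c : ℝ := Real.sqrt π * Real.Gamma (m + 1/2) with hc
  have hp : (-1:ℝ) < -((m+1)/2) := by linarith
  set p : ℝ := -((m+1)/2) with hpdef
  -- integrability of the majorant
  have hint : IntegrableOn (fun t : ℝ => c * (1-t) ^ p) (Ioo (0:ℝ) 1) := by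
    apply Integrable.const_mul
    have h1 : IntervalIntegrable (fun x : ℝ => x ^ p) volume 0 1 :=
      intervalIntegral.intervalIntegrable_rpow' hp
    have h2 : IntervalIntegrable (fun x : ℝ => (1 - x) ^ p) volume 0 1 := by
      simpa using (h1.comp_sub_left 1).symm
    exact ((intervalIntegrable_iff_integrableOn_Ioc_of_le zero_le_one).1 h2).mono_set
      Ioo_subset_Ioc_self
  -- value of the majorant integral
  have hval : (∫ t in Ioo (0:ℝ) 1, c * (1-t) ^ p) = c * (2 / (1-m)) := by
    rw [integral_const_mul]
    congr 1
    rw [← MeasureTheory.integral_Ioc_eq_integral_Ioo,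
      ← intervalIntegral.integral_of_le zero_le_one]
    rw [show (∫ x in (0:ℝ)..1, (1-x) ^ p) = ∫ x in (1-(1:ℝ))..(1-(0:ℝ)), x ^ p from
      intervalIntegral.integral_comp_sub_left (fun x => x ^ p) 1]
    norm_num
    rw [integral_rpow (Or.inl hp)]
    rw [Real.one_rpow, Real.zero_rpow (by rw [hpdef]; intro h; nlinarith : p + 1 ≠ 0)]
    rw [hpdef]
    field_simp
    ring
  have hineq : Rfun m α ≤ ∫ t in Ioo (0:ℝ) 1, c * (1-t) ^ p := by
    rw [Rfun]
    apply integral_mono_of_nonneg _ hint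
    · -- a.e. pointwise bound
      filter_upwards [ae_restrict_mem measurableSet_Ioo] with t ht
      have h1 : (0:ℝ) ≤ (1 - t^2) ^ (m/2) :=
        Real.rpow_nonneg (by nlinarith [ht.1, ht.2]) _
      calc (1 - t ^ 2) ^ (m / 2) *
            ∫ r in Set.Ioi (0 : ℝ), ∫ r' in Set.Ioi (0 : ℝ),
              Real.exp (-(r ^ 2 + r' ^ 2 - 2 * r * r' * t * α) / 2) * (r * r') ^ m
          ≤ (1 - t ^ 2) ^ (m / 2) *
            (((1-t) ^ (-(2*m+1)/2) * (1/2) * Real.Gamma ((2*m+1)/2))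
              * Real.sqrt (π / ((1+t)/4))) :=
            mul_le_mul_of_nonneg_left (key m hm0 α hα ht.1 ht.2) h1
        _ ≤ c * (1-t) ^ p := alg m hm0 hm1 ht.1 ht.2
    · -- a.e. nonnegativity
      filter_upwards [ae_restrict_mem measurableSet_Ioo] with t ht
      have h1 : (0:ℝ) ≤ (1 - t^2) ^ (m/2) :=
        Real.rpow_nonneg (by nlinarith [ht.1, ht.2]) _
      apply mul_nonneg h1
      apply setIntegral_nonneg measurableSet_Ioi
      intro r hr
      apply setIntegral_nonneg measurableSet_Ioi
      intro r' hr'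
      have : (0:ℝ) ≤ r * r' := mul_nonneg (le_of_lt hr) (le_of_lt hr')
      positivity
  calc Rfun m α ≤ ∫ t in Ioo (0:ℝ) 1, c * (1-t) ^ p := hineq
    _ = c * (2 / (1-m)) := hval
    _ = 2 * Real.sqrt π * Real.Gamma (m + 1/2) / (1-m) := by rw [hc]; ring
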